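/- Let M be an inside factorial monoid with base Q. Then Q is linked to M, and consequently M = Ap(M,Q) + ⟨Q⟩. -/

import Mathlib

/-- `x ≤_M y` : divisibility in the additive monoid `M`. -/
def MDvd {M : Type*} [AddCancelCommMonoid M] (x y : M) : Prop := ∃ z : M, y = x + z

/-- The Apéry set `Ap(M,Q) = M \ (Q + M)`. -/
def AperyM {M : Type*} [AddCancelCommMonoid M] (Q : Set M) : Set M :=
  {x | ∀ q ∈ Q, ¬ MDvd q x}

/-- The sum `Σ_{q ∈ Q} λ_q q` encoded by a finitely supported function. -/
def fsum {M : Type*} [AddCancelCommMonoid M] (f : M →₀ ℕ) : M :=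
  f.sum fun q n => n • q

/-- `⟨Q⟩` is factorial, freely generated by `Q`: representations as `ℕ`-combinations
of elements of `Q` are unique. -/
def FreeOn {M : Type*} [AddCancelCommMonoid M] (Q : Set M) : Prop :=
  ∀ f g : M →₀ ℕ, (f.support : Set M) ⊆ Q → (g.support : Set M) ⊆ Q →
    fsum f = fsum g → f = g

/-- `M` is inside factorial with base `Q`: `⟨Q⟩` is factorial freely generated by `Q`
and every nonzero element of `M` has a positive multiple in `⟨Q⟩`. -/
def InsideFactorial {M : Type*} [AddCancelCommMonoid M] (Q : Set M) : Prop :=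
  FreeOn Q ∧ ∀ x : M, x ≠ 0 → ∃ m : ℕ, 0 < m ∧ m • x ∈ AddSubmonoid.closure Q

/-- `Q` is linked to `M`. -/
def LinkedM {M : Type*} [AddCancelCommMonoid M] (Q : Set M) : Prop :=
  ∀ x : M, x ≠ 0 → ∃ c : ℕ, ∀ f : M →₀ ℕ, (f.support : Set M) ⊆ Q →
    MDvd (fsum f) x → (f.sum fun _ n => n) ≤ c

section
variable {M : Type*} [AddCancelCommMonoid M]

lemma fsum_zero : fsum (0 : M →₀ ℕ) = 0 := Finsupp.sum_zero_index

lemma fsum_add (f g : M →₀ ℕ) : fsum (f + g) = fsum f + fsum g :=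
  Finsupp.sum_add_index' (fun a => zero_nsmul a) (fun a m n => add_nsmul a m n)

lemma fsum_single (q : M) (n : ℕ) : fsum (Finsupp.single q n) = n • q :=
  Finsupp.sum_single_index (zero_nsmul q)

lemma fsum_nsmul (k : ℕ) (f : M →₀ ℕ) : fsum (k • f) = k • fsum f := by
  induction k with
  | zero => simp [fsum_zero]
  | succ k ih => rw [succ_nsmul, succ_nsmul, fsum_add, ih]

def wt (f : M →₀ ℕ) : ℕ := f.sum fun _ n => n

lemma wt_add (f g : M →₀ ℕ) : wt (f + g) = wt f + wt g :=
  Finsupp.sum_add_index' (fun _ => rfl) (fun _ _ _ => rfl)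

lemma wt_nsmul (k : ℕ) (f : M →₀ ℕ) : wt (k • f) = k * wt f := by
  induction k with
  | zero => simp [wt]
  | succ k ih => rw [succ_nsmul, wt_add, ih, Nat.succ_mul]

lemma fsum_mem_closure_iff (Q : Set M) (x : M) :
    x ∈ AddSubmonoid.closure Q ↔ ∃ f : M →₀ ℕ, (f.support : Set M) ⊆ Q ∧ fsum f = x := by
  constructor
  · intro hx
    induction hx using AddSubmonoid.closure_induction with
    | mem q hq => exact ⟨Finsupp.single q 1, by
        refine ⟨?_, by rw [fsum_single, one_nsmul]⟩
        intro a ha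
        have := Finsupp.support_single_subset ha
        simp at this; subst this; exact hq⟩
    | zero => exact ⟨0, by simp, fsum_zero⟩
    | add a b _ _ iha ihb =>
      obtain ⟨f, hf, hfs⟩ := iha
      obtain ⟨g, hg, hgs⟩ := ihb
      exact ⟨f + g, by
        refine ⟨?_, by rw [fsum_add, hfs, hgs]⟩
        classical
        intro a ha
        rcases Finset.mem_union.1 (Finsupp.support_add ha) with h | h
        · exact hf h
        · exact hg h⟩
  · rintro ⟨f, hf, rfl⟩
    rw [fsum, Finsupp.sum]
    exact AddSubmonoid.sum_mem _ fun q hq =>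
      AddSubmonoid.nsmul_mem _ (AddSubmonoid.subset_closure (hf hq)) _
end


/-- the base of an inside factorial monoid is linked to the monoid; in
particular `M = Ap(M,Q) + ⟨Q⟩`. -/
theorem base_linked_of_insideFactorial {M : Type*} [AddCancelCommMonoid M]
    (hred : ∀ a b : M, a + b = 0 → a = 0)
    (Q : Set M) (hIF : InsideFactorial Q) :
    LinkedM Q ∧ ∀ x : M, ∃ w ∈ AperyM Q, ∃ h ∈ AddSubmonoid.closure Q, x = w + h := by
  classical
  obtain ⟨hfree, hmul⟩ := hIF
  have hzeroQ : (0 : M) ∉ Q := by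
    intro h0
    have h1 : fsum (Finsupp.single (0 : M) 1) = fsum (0 : M →₀ ℕ) := by
      rw [fsum_single, fsum_zero, nsmul_zero]
    have := hfree _ _ (by
        intro a ha
        have := Finsupp.support_single_subset ha
        simp at this; subst this; exact h0) (by simp) h1
    simpa using DFunLike.congr_fun this 0
  have hlinked : LinkedM Q := by
    intro x hx
    obtain ⟨m, hm, hmx⟩ := hmul x hx
    obtain ⟨g, hg, hgs⟩ := (fsum_mem_closure_iff Q _).1 hmx
    refine ⟨wt g, fun f hf ⟨z, hz⟩ => ?_⟩
    obtain ⟨k, hk, h, hh, hhs⟩ :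
        ∃ k : ℕ, 0 < k ∧ ∃ h : M →₀ ℕ, (h.support : Set M) ⊆ Q ∧ fsum h = k • z := by
      by_cases hz0 : z = 0
      · exact ⟨1, one_pos, 0, by simp, by simp [hz0, fsum_zero]⟩
      · obtain ⟨k, hk, hkz⟩ := hmul z hz0
        obtain ⟨h, hh, hhs⟩ := (fsum_mem_closure_iff Q _).1 hkz
        exact ⟨k, hk, h, hh, hhs⟩
    have key : fsum (k • g) = fsum ((k * m) • f + m • h) := by
      rw [fsum_add, fsum_nsmul, fsum_nsmul, fsum_nsmul, hgs, hhs, hz]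
      rw [smul_smul, smul_smul, smul_add, mul_comm m k]
    have heq : k • g = (k * m) • f + m • h := by
      refine hfree _ _ ?_ ?_ key
      · exact fun a ha => hg (Finsupp.support_smul ha)
      · intro a ha
        rcases Finset.mem_union.1 (Finsupp.support_add ha) with h' | h'
        · exact hf (Finsupp.support_smul h')
        · exact hh (Finsupp.support_smul h')
    have hwt : k * wt g = k * m * wt f + m * wt h := by
      have := congrArg wt heq
      rwa [wt_nsmul, wt_add, wt_nsmul, wt_nsmul] at this
    have : k * wt f ≤ k * wt g := by
      calc k * wt f ≤ k * m * wt f := by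
            rw [mul_assoc]; exact Nat.mul_le_mul_left k (Nat.le_mul_of_pos_left _ hm)
        _ ≤ k * wt g := by omega
    exact Nat.le_of_mul_le_mul_left this hk
  refine ⟨hlinked, fun x => ?_⟩
  by_cases hx : x = 0
  · refine ⟨0, ?_, 0, (AddSubmonoid.closure Q).zero_mem, by simp [hx]⟩
    rintro q hq ⟨z, hz⟩
    exact hzeroQ (hred q z hz.symm ▸ hq)
  · obtain ⟨c, hc⟩ := hlinked x hx
    set P : ℕ → Prop := fun n =>
      ∃ f : M →₀ ℕ, (f.support : Set M) ⊆ Q ∧ MDvd (fsum f) x ∧ wt f = n with hP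
    have hP0 : P 0 := ⟨0, by simp, ⟨x, by rw [fsum_zero, zero_add]⟩, by simp [wt]⟩
    set N := Nat.findGreatest P c with hN
    have hPN : P N := Nat.findGreatest_spec (Nat.zero_le c) hP0
    obtain ⟨f, hf, ⟨w, hw⟩, hwt⟩ := hPN
    refine ⟨w, ?_, fsum f, (fsum_mem_closure_iff Q _).2 ⟨f, hf, rfl⟩, by rw [hw, add_comm]⟩
    rintro q hq ⟨z, hz⟩
    have hf' : ((f + Finsupp.single q 1).support : Set M) ⊆ Q := by
      intro a ha
      rcases Finset.mem_union.1 (Finsupp.support_add ha) with h' | h'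
      · exact hf h'
      · have := Finsupp.support_single_subset h'
        simp at this; subst this; exact hq
    have hdvd : MDvd (fsum (f + Finsupp.single q 1)) x :=
      ⟨z, by rw [fsum_add, fsum_single, one_nsmul, hw, hz, add_assoc]⟩
    have hwt' : wt (f + Finsupp.single q 1) = N + 1 := by
      rw [wt_add, hwt, wt]
      rw [Finsupp.sum_single_index rfl]
    have hle : N + 1 ≤ c := hwt' ▸ hc _ hf' hdvd
    exact Nat.findGreatest_is_greatest (Nat.lt_succ_self N) hle ⟨_, hf', hdvd, hwt'⟩
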